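/- arXiv:1007.0473 — 2 statements merged into one kernel-verified Lean document; each statement's English description precedes it below -/
import Mathlib

section
/- Let 𝔛 be a symmetric association scheme of class d ≥ 2 such that θ*_0, θ*_1, …, θ*_d are mutually distinct, set K_i = ∏_{j=1, j≠i}^d (θ*_0 − θ*_j)/(θ*_i − θ*_j), and suppose there exists l ∈ {2, 3, …, d} such that K_i = −p_i(l) for every i ∈ {1, …, d}. Then (|X|E_1)^{∘j} E_l = 0 for every j ∈ {0, 1, …, d−1}, where (|X|E_1)^{∘j} denotes the j-fold Hadamard power (with 0-th power the all-ones matrix J). -/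
open Matrix BigOperators Finset

/-- A symmetric association scheme of class `d` on a finite vertex set `V`,
bundled together with its adjacency matrices, primitive idempotents,
eigenmatrices `P`, `Q` and Krein parameters. -/
structure SymmAssocScheme (d : ℕ) (V : Type*) [Fintype V] [DecidableEq V] where
  /-- the relations `R_0, …, R_d` -/
  R : Fin (d + 1) → Set (V × V)
  R_nonempty : ∀ i, (R i).Nonempty
  R_zero : R 0 = {p : V × V | p.1 = p.2}
  R_cover : ∀ p : V × V, ∃ i, p ∈ R i
  R_disjoint : ∀ i j, i ≠ j → R i ∩ R j = ∅
  R_symm : ∀ i, ∀ x y : V, (x, y) ∈ R i → (y, x) ∈ R i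
  /-- the intersection numbers `p_{ij}^k` -/
  pnum : Fin (d + 1) → Fin (d + 1) → Fin (d + 1) → ℕ
  pnum_spec : ∀ i j k, ∀ x y : V, (x, y) ∈ R k →
    pnum i j k = {z : V | (x, z) ∈ R i ∧ (z, y) ∈ R j}.ncard
  /-- the adjacency matrices `A_0, …, A_d` -/
  A : Fin (d + 1) → Matrix V V ℂ
  A_of_mem : ∀ i, ∀ x y : V, (x, y) ∈ R i → A i x y = 1
  A_of_not_mem : ∀ i, ∀ x y : V, (x, y) ∉ R i → A i x y = 0
  /-- the primitive idempotents `E_0, …, E_d` -/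
  E : Fin (d + 1) → Matrix V V ℂ
  E_zero : E 0 = (Fintype.card V : ℂ)⁻¹ • Matrix.of (fun _ _ => (1 : ℂ))
  E_sum : ∑ i, E i = (1 : Matrix V V ℂ)
  E_mul : ∀ i j, E i * E j = if i = j then E i else 0
  E_ne_zero : ∀ i, E i ≠ 0
  /-- the first eigenmatrix: `P i j = p_i(j)` -/
  P : Fin (d + 1) → Fin (d + 1) → ℝ
  /-- the second eigenmatrix: `Q i j = q_i(j)`; in particular `θ*_j = Q 1 j` -/
  Q : Fin (d + 1) → Fin (d + 1) → ℝ
  A_eq : ∀ i, A i = ∑ j, (P i j : ℂ) • E j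
  E_eq : ∀ i, E i = (Fintype.card V : ℂ)⁻¹ • ∑ j, (Q i j : ℂ) • A j
  /-- the Krein parameters `q_{ij}^k` -/
  krein : Fin (d + 1) → Fin (d + 1) → Fin (d + 1) → ℝ
  krein_spec : ∀ i j, Matrix.hadamard (E i) (E j) =
    (Fintype.card V : ℂ)⁻¹ • ∑ k, (krein i j k : ℂ) • E k
  krein_nonneg : ∀ i j k, 0 ≤ krein i j k

namespace SymmAssocScheme

variable {d : ℕ} {V : Type*} [Fintype V] [DecidableEq V]

/-- the `h`-fold Hadamard power `E_1^{∘h}` of `E_1`, with `E_1^{∘0} = J`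
the all-ones matrix. -/
noncomputable def hadPowE1 (S : SymmAssocScheme d V) : ℕ → Matrix V V ℂ
  | 0 => Matrix.of fun _ _ => 1
  | n + 1 => Matrix.hadamard (hadPowE1 S n) (S.E 1)

/-- `N h` is the set of indices `j` such that `E_j` is a component of `E_1^{∘h}`
(i.e. `E_j · E_1^{∘h} ≠ 0`) but not a component of `E_1^{∘l}` for any `l < h`. -/
def N (S : SymmAssocScheme d V) (h : ℕ) : Set (Fin (d + 1)) :=
  {j | S.E j * S.hadPowE1 h ≠ 0 ∧ ∀ l < h, S.E j * S.hadPowE1 l = 0}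

/-- `𝔛` is `Q`-polynomial with respect to the ordering `E_{σ 0}, E_{σ 1}, …, E_{σ d}`:
for each `h` there is a polynomial `v*_h` of degree exactly `h` with
`q_{σ h}(j) = v*_h(q_1(j))` for all `j`. -/
def IsQPolyOrdering (S : SymmAssocScheme d V) (σ : Equiv.Perm (Fin (d + 1))) : Prop :=
  ∀ h : Fin (d + 1), ∃ v : Polynomial ℝ, v.degree = (h : ℕ) ∧
    ∀ j, S.Q (σ h) j = v.eval (S.Q 1 j)

/-- `𝔛` is `Q`-polynomial with respect to `E_1`: it is `Q`-polynomial with respect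
to some ordering of the form `E_0, E_1, E_{i_2}, …, E_{i_d}`. -/
def IsQPolyE1 (S : SymmAssocScheme d V) : Prop :=
  ∃ σ : Equiv.Perm (Fin (d + 1)), σ 0 = 0 ∧ σ 1 = 1 ∧ S.IsQPolyOrdering σ

/-- `𝔛` is `P`-polynomial with respect to the ordering `A_{σ 0}, A_{σ 1}, …, A_{σ d}`. -/
def IsPPolyOrdering (S : SymmAssocScheme d V) (σ : Equiv.Perm (Fin (d + 1))) : Prop :=
  ∀ h : Fin (d + 1), ∃ v : Polynomial ℝ, v.degree = (h : ℕ) ∧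
    ∀ j, S.P (σ h) j = v.eval (S.P 1 j)

/-- `𝔛` is `P`-polynomial with respect to `A_1`. -/
def IsPPolyA1 (S : SymmAssocScheme d V) : Prop :=
  ∃ σ : Equiv.Perm (Fin (d + 1)), σ 0 = 0 ∧ σ 1 = 1 ∧ S.IsPPolyOrdering σ

/-- the ratio `K_i = ∏_{j=1, j≠i}^d (θ*_0 − θ*_j)/(θ*_i − θ*_j)`,
where `θ*_j = q_1(j)`. -/
noncomputable def K (S : SymmAssocScheme d V) (i : Fin (d + 1)) : ℝ :=
  ∏ j ∈ Finset.univ.filter (fun j => j ≠ 0 ∧ j ≠ i),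
    (S.Q 1 0 - S.Q 1 j) / (S.Q 1 i - S.Q 1 j)

end SymmAssocScheme


section LagrangeAux
open Finset Polynomial in
lemma lagrange_aux {d : ℕ} (θ : Fin (d+1) → ℝ) (hθ : Function.Injective θ) (j : ℕ) (hj : j < d) :
    ∑ i ∈ Finset.univ.erase (0 : Fin (d+1)),
      (∏ k ∈ Finset.univ.filter (fun k => k ≠ 0 ∧ k ≠ i), (θ 0 - θ k)/(θ i - θ k)) * θ i ^ j
    = θ 0 ^ j := by
  set s := Finset.univ.erase (0 : Fin (d+1)) with hs
  have hcard : #s = d := by simp [hs]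
  have hinj : Set.InjOn θ s := hθ.injOn
  have hdeg : (Polynomial.X ^ j : Polynomial ℝ).degree < #s := by
    rw [hcard, Polynomial.degree_X_pow]; exact_mod_cast hj
  have h := Lagrange.eq_interpolate hinj hdeg
  have h2 := congrArg (Polynomial.eval (θ 0)) h
  rw [Lagrange.interpolate_apply, Polynomial.eval_finset_sum] at h2
  simp only [Polynomial.eval_pow, Polynomial.eval_X, Polynomial.eval_mul, Polynomial.eval_C] at h2
  rw [h2]
  apply Finset.sum_congr rfl
  intro i hi
  have hset : s.erase i = Finset.univ.filter (fun k => k ≠ 0 ∧ k ≠ i) := by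
    ext k; simp [hs, Finset.mem_erase, and_comm]
  rw [mul_comm]
  congr 1
  rw [Lagrange.basis, Polynomial.eval_prod, hset]
  apply Finset.prod_congr rfl
  intro k hk
  simp [Lagrange.basisDivisor, div_eq_inv_mul]
end LagrangeAux

/-- Suppose `𝔛` has class `d ≥ 2`, `θ*_0, …, θ*_d` are mutually
distinct, and there is `l ∈ {2, …, d}` with `K_i = −p_i(l)` for all `i ∈ {1, …, d}`.
Then `(|X|E_1)^{∘j} E_l = 0` for every `j ∈ {0, …, d−1}`, where `(|X|E_1)^{∘j}` is the
`j`-fold entrywise power (the `0`-th power being the all-ones matrix `J`). -/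
theorem statement11 {d : ℕ} {V : Type*} [Fintype V] [DecidableEq V]
    (S : SymmAssocScheme d V) (hd : 2 ≤ d)
    (hθ : Function.Injective fun j : Fin (d + 1) => S.Q 1 j)
    (l : Fin (d + 1)) (hl : 2 ≤ (l : ℕ))
    (hK : ∀ i : Fin (d + 1), i ≠ 0 → S.K i = -S.P i l) :
    ∀ j : ℕ, j < d →
      (Matrix.of fun x y : V => ((Fintype.card V : ℂ) * S.E 1 x y) ^ j) * S.E l = 0 := by
  intro j hj
  -- V is nonempty
  obtain ⟨p, hp⟩ := S.R_nonempty 0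
  have : Nonempty V := ⟨p.1⟩
  have hn : (Fintype.card V : ℂ) ≠ 0 := by
    exact_mod_cast Nat.cast_ne_zero.mpr Fintype.card_ne_zero
  -- adjacency entries
  have hA : ∀ x y : V, ∀ m, (x, y) ∈ S.R m → ∀ k, S.A k x y = if k = m then 1 else 0 := by
    intro x y m hm k
    by_cases hkm : k = m
    · subst hkm; simp [S.A_of_mem k x y hm]
    · rw [if_neg hkm]
      apply S.A_of_not_mem
      intro hk
      have := S.R_disjoint k m hkm
      exact absurd (Set.mem_inter hk hm) (by rw [this]; exact Set.notMem_empty _)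
  -- entry formula for n * E1
  have hE1 : ∀ x y : V, ∀ m, (x, y) ∈ S.R m →
      (Fintype.card V : ℂ) * S.E 1 x y = (S.Q 1 m : ℂ) := by
    intro x y m hm
    have := S.E_eq 1
    have h1 : S.E 1 x y = (Fintype.card V : ℂ)⁻¹ * ∑ k, (S.Q 1 k : ℂ) * S.A k x y := by
      rw [this]; simp [Matrix.smul_apply, Matrix.sum_apply]
    rw [h1, ← mul_assoc, mul_inv_cancel₀ hn, one_mul]
    rw [Finset.sum_eq_single m]
    · rw [hA x y m hm m, if_pos rfl, mul_one]
    · intro k _ hk; rw [hA x y m hm k, if_neg hk, mul_zero]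
    · intro h; exact absurd (Finset.mem_univ m) h
  -- Hadamard power as linear combination of adjacency matrices
  have hHad : (Matrix.of fun x y : V => ((Fintype.card V : ℂ) * S.E 1 x y) ^ j) =
      ∑ m, ((S.Q 1 m : ℂ) ^ j) • S.A m := by
    ext x y
    obtain ⟨m, hm⟩ := S.R_cover (x, y)
    rw [Matrix.of_apply, hE1 x y m hm]
    rw [Matrix.sum_apply]
    rw [Finset.sum_eq_single m]
    · rw [Matrix.smul_apply, hA x y m hm m, if_pos rfl, smul_eq_mul, mul_one]
    · intro k _ hk; rw [Matrix.smul_apply, hA x y m hm k, if_neg hk, smul_eq_mul, mul_zero]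
    · intro h; exact absurd (Finset.mem_univ m) h
  -- A m * E l = P m l • E l
  have hAE : ∀ m, S.A m * S.E l = (S.P m l : ℂ) • S.E l := by
    intro m
    rw [S.A_eq m, Finset.sum_mul]
    rw [Finset.sum_eq_single l]
    · rw [Matrix.smul_mul, S.E_mul l l, if_pos rfl]
    · intro k _ hk; rw [Matrix.smul_mul, S.E_mul k l, if_neg hk, smul_zero]
    · intro h; exact absurd (Finset.mem_univ l) h
  -- P 0 l = 1
  have hA0 : S.A 0 = 1 := by
    ext x y
    by_cases hxy : x = y
    · subst hxy
      rw [S.A_of_mem 0 x x (by rw [S.R_zero]; exact rfl), Matrix.one_apply_eq]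
    · rw [S.A_of_not_mem 0 x y (by rw [S.R_zero]; exact hxy), Matrix.one_apply_ne hxy]
  have hP0 : S.P 0 l = 1 := by
    have h1 : (S.P 0 l : ℂ) • S.E l = (1 : ℂ) • S.E l := by
      rw [← hAE 0, hA0, one_mul, one_smul]
    have h2 : ((S.P 0 l : ℂ) - 1) • S.E l = 0 := by
      rw [sub_smul, h1, sub_self]
    rcases smul_eq_zero.mp h2 with h | h
    · have : (S.P 0 l : ℂ) = 1 := by linear_combination h
      exact_mod_cast this
    · exact absurd h (S.E_ne_zero l)
  -- combine
  rw [hHad, Finset.sum_mul]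
  have hc : ∀ m : Fin (d+1), ((S.Q 1 m : ℂ) ^ j) • S.A m * S.E l =
      ((S.Q 1 m : ℂ) ^ j * (S.P m l : ℂ)) • S.E l := by
    intro m; rw [Matrix.smul_mul, hAE m, smul_smul]
  simp only [hc]
  rw [← Finset.sum_smul]
  have hzero : (∑ m, (S.Q 1 m : ℂ) ^ j * (S.P m l : ℂ)) = 0 := by
    have hreal : (∑ m, (S.Q 1 m : ℝ) ^ j * S.P m l) = 0 := by
      rw [← Finset.add_sum_erase _ _ (Finset.mem_univ (0 : Fin (d+1)))]
      have hsum : ∑ m ∈ Finset.univ.erase (0 : Fin (d+1)), S.Q 1 m ^ j * S.P m l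
          = -(S.Q 1 0 ^ j) := by
        rw [← lagrange_aux (fun k => S.Q 1 k) hθ j hj, ← Finset.sum_neg_distrib]
        apply Finset.sum_congr rfl
        intro i hi
        have hi0 : i ≠ 0 := (Finset.mem_erase.mp hi).1
        have := hK i hi0
        have hP : S.P i l = -S.K i := by linarith [hK i hi0]
        rw [hP, SymmAssocScheme.K]
        ring
      rw [hsum, hP0, mul_one, add_neg_cancel]
    calc (∑ m, (S.Q 1 m : ℂ) ^ j * (S.P m l : ℂ))
        = ((∑ m, (S.Q 1 m : ℝ) ^ j * S.P m l : ℝ) : ℂ) := by push_cast; ring_nf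
      _ = 0 := by rw [hreal]; exact Complex.ofReal_zero
  rw [hzero, zero_smul]
end

section
/- Let 𝔛 be a symmetric association scheme of class d ≥ 2 with p_1(0), p_1(1), …, p_1(d) mutually distinct, and write θ_i = p_1(i). Then the following are equivalent: (1) 𝔛 is a P-polynomial scheme with respect to A_1, i.e., P-polynomial with respect to some ordering A_0, A_1, A_{i_2}, …, A_{i_d}; (2) there exists l ∈ {2, 3, …, d} such that for every i ∈ {1, 2, …, d}, ∏_{j=1, j≠i}^d (θ_0 − θ_j)/(θ_i − θ_j) = −q_i(l). Moreover, if (2) holds then l = i_d, the last index of the P-polynomial ordering. -/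
open Matrix BigOperators Finset

namespace S13
open Polynomial
open scoped Classical

variable {d : ℕ} {V : Type*} [Fintype V] [DecidableEq V] (S : SymmAssocScheme d V)

noncomputable def pt (m : Fin (d + 1)) : V × V := (S.R_nonempty m).some

lemma pt_mem (m : Fin (d + 1)) : pt S m ∈ S.R m := (S.R_nonempty m).some_mem

lemma not_mem_of_ne {m k : Fin (d + 1)} (h : m ≠ k) {p : V × V} (hp : p ∈ S.R k) :
    p ∉ S.R m := by
  intro hm
  have h2 := S.R_disjoint m k h
  have : p ∈ S.R m ∩ S.R k := ⟨hm, hp⟩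
  rw [h2] at this
  exact this

noncomputable def rel (p : V × V) : Fin (d + 1) := (S.R_cover p).choose

lemma rel_mem (p : V × V) : p ∈ S.R (rel S p) := (S.R_cover p).choose_spec

lemma rel_eq {p : V × V} {m : Fin (d + 1)} (hp : p ∈ S.R m) : rel S p = m := by
  by_contra h
  exact not_mem_of_ne S h hp (rel_mem S p)

lemma rel_pt (m : Fin (d + 1)) : rel S (pt S m) = m := rel_eq S (pt_mem S m)

lemma A_apply (m : Fin (d + 1)) (x y : V) :
    S.A m x y = if m = rel S (x, y) then 1 else 0 := by
  rcases eq_or_ne m (rel S (x, y)) with h | h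
  · rw [if_pos h, h]
    exact S.A_of_mem _ _ _ (rel_mem S (x, y))
  · rw [if_neg h]
    exact S.A_of_not_mem _ _ _ (not_mem_of_ne S h (rel_mem S (x, y)))

lemma A_pt (m k : Fin (d + 1)) :
    S.A m (pt S k).1 (pt S k).2 = if m = k then 1 else 0 := by
  have := A_apply S m (pt S k).1 (pt S k).2
  rwa [Prod.mk.eta, rel_pt] at this

lemma nonempty_V (S : SymmAssocScheme d V) : Nonempty V := ⟨(pt S 0).1⟩

lemma n_ne_zero (S : SymmAssocScheme d V) : (Fintype.card V : ℂ) ≠ 0 := by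
  have : Nonempty V := nonempty_V S
  simp [Fintype.card_ne_zero]

lemma entry_sum_smul_A (c : Fin (d + 1) → ℂ) (x y : V) :
    (∑ m, c m • S.A m) x y = c (rel S (x, y)) := by
  rw [Matrix.sum_apply]
  have : ∀ m : Fin (d + 1), (c m • S.A m) x y = if m = rel S (x, y) then c m else 0 := by
    intro m
    rw [Matrix.smul_apply, A_apply S m x y]
    split <;> simp
  simp_rw [this]
  simp

lemma E_entry (i : Fin (d + 1)) (x y : V) :
    S.E i x y = (Fintype.card V : ℂ)⁻¹ * (S.Q i (rel S (x, y)) : ℂ) := by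
  conv_lhs => rw [S.E_eq i]
  rw [Matrix.smul_apply, entry_sum_smul_A S (fun m => (S.Q i m : ℂ)) x y, smul_eq_mul]

lemma Q_zero (k : Fin (d + 1)) : S.Q 0 k = 1 := by
  have h1 := E_entry S 0 (pt S k).1 (pt S k).2
  rw [Prod.mk.eta, rel_pt, S.E_zero] at h1
  have h2 : ((Fintype.card V : ℂ))⁻¹ • Matrix.of (fun _ _ => (1:ℂ)) (pt S k).1 (pt S k).2
      = (Fintype.card V : ℂ)⁻¹ := by simp
  rw [Matrix.smul_apply] at h1
  simp only [Matrix.of_apply, smul_eq_mul, mul_one] at h1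
  have h3 : (S.Q 0 k : ℂ) = 1 := by
    have hn := n_ne_zero S
    field_simp at h1
    exact_mod_cast h1.symm
  exact_mod_cast h3

lemma E_coeff_ext {c c' : Fin (d + 1) → ℂ}
    (h : ∑ j, c j • S.E j = ∑ j, c' j • S.E j) : ∀ j, c j = c' j := by
  intro j
  have h2 : (∑ i, c i • S.E i) * S.E j = (∑ i, c' i • S.E i) * S.E j := by rw [h]
  rw [Finset.sum_mul, Finset.sum_mul] at h2
  have key : ∀ (cc : Fin (d+1) → ℂ), (∑ i, cc i • S.E i * S.E j) = cc j • S.E j := by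
    intro cc
    have : ∀ i, cc i • S.E i * S.E j = if i = j then cc i • S.E i else 0 := by
      intro i
      rw [smul_mul_assoc, S.E_mul i j]
      split <;> simp_all
    simp_rw [this]
    simp
  rw [key, key] at h2
  have h3 : (c j - c' j) • S.E j = 0 := by rw [sub_smul, h2, sub_self]
  rcases smul_eq_zero.mp h3 with h4 | h4
  · exact sub_eq_zero.mp h4
  · exact absurd h4 (S.E_ne_zero j)

lemma A1_pow (t : ℕ) : S.A 1 ^ t = ∑ j, (((S.P 1 j : ℝ) : ℂ) ^ t) • S.E j := by
  induction t with
  | zero => simp [S.E_sum]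
  | succ t ih =>
    rw [pow_succ, ih, S.A_eq 1, Finset.sum_mul_sum]
    have : ∀ j m : Fin (d+1), ((S.P 1 j : ℂ) ^ t • S.E j) * ((S.P 1 m : ℂ) • S.E m)
        = if m = j then ((S.P 1 j : ℂ) ^ (t+1)) • S.E j else 0 := by
      intro j m
      rw [smul_mul_assoc, mul_smul_comm, S.E_mul j m, smul_smul]
      rcases eq_or_ne m j with rfl | h
      · rw [if_pos rfl, if_pos rfl, pow_succ, mul_comm ((S.P 1 m : ℂ)^t)]
      · rw [if_neg (Ne.symm h), if_neg h, smul_zero]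
    simp_rw [this]
    simp

lemma aeval_A1 (g : Polynomial ℂ) :
    (Polynomial.aeval (S.A 1)) g = ∑ j, g.eval ((S.P 1 j : ℝ) : ℂ) • S.E j := by
  induction g using Polynomial.induction_on' with
  | add p q hp hq =>
    rw [map_add, hp, hq, ← Finset.sum_add_distrib]
    simp [add_smul]
  | monomial n a =>
    rw [Polynomial.aeval_monomial, A1_pow]
    rw [Finset.mul_sum]
    refine Finset.sum_congr rfl fun j _ => ?_
    rw [Polynomial.eval_monomial, mul_smul_comm, ← Algebra.smul_def, smul_smul, mul_comm a]

noncomputable def Ar (m : Fin (d + 1)) : Matrix V V ℝ :=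
  Matrix.of fun x y => if (x, y) ∈ S.R m then 1 else 0

lemma Ar_apply (m : Fin (d + 1)) (x y : V) :
    Ar S m x y = if m = rel S (x, y) then 1 else 0 := by
  unfold Ar
  rcases eq_or_ne m (rel S (x, y)) with h | h
  · rw [if_pos h, Matrix.of_apply, if_pos (h ▸ rel_mem S (x, y))]
  · rw [if_neg h, Matrix.of_apply, if_neg (not_mem_of_ne S h (rel_mem S (x, y)))]

lemma Ar_pt (m k : Fin (d + 1)) :
    Ar S m (pt S k).1 (pt S k).2 = if m = k then 1 else 0 := by
  have := Ar_apply S m (pt S k).1 (pt S k).2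
  rwa [Prod.mk.eta, rel_pt] at this

lemma Ar_map (m : Fin (d + 1)) : (Ar S m).map (algebraMap ℝ ℂ) = S.A m := by
  ext x y
  rw [Matrix.map_apply, Ar_apply S m x y, A_apply S m x y]
  split <;> simp

lemma entry_sum_smul_Ar (c : Fin (d + 1) → ℝ) (x y : V) :
    (∑ m, c m • Ar S m) x y = c (rel S (x, y)) := by
  rw [Matrix.sum_apply]
  have : ∀ m : Fin (d + 1), (c m • Ar S m) x y = if m = rel S (x, y) then c m else 0 := by
    intro m
    rw [Matrix.smul_apply, Ar_apply S m x y]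
    split <;> simp
  simp_rw [this]
  simp

/-- the real adjacency matrix of the graph `(V, R_1)` -/
noncomputable abbrev B (S : SymmAssocScheme d V) : Matrix V V ℝ := Ar S 1

lemma B_map_pow (t : ℕ) : (B S ^ t).map (algebraMap ℝ ℂ) = S.A 1 ^ t := by
  induction t with
  | zero => simp [Matrix.map_one]
  | succ t ih => rw [pow_succ, pow_succ, Matrix.map_mul, ih, Ar_map]

lemma Bpow_nonneg (t : ℕ) (x y : V) : 0 ≤ (B S ^ t) x y := by
  induction t generalizing x y with
  | zero =>
    rw [pow_zero]
    by_cases h : x = y <;> simp [Matrix.one_apply, h]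
  | succ t ih =>
    rw [pow_succ, Matrix.mul_apply]
    exact Finset.sum_nonneg fun z _ => mul_nonneg (ih x z) (by
      rw [show B S = Ar S 1 from rfl, Ar_apply]
      split <;> norm_num)

/-- `cB t m` is the coefficient of `A_m` in `B ^ t` -/
noncomputable def cB (t : ℕ) (m : Fin (d + 1)) : ℝ := (B S ^ t) (pt S m).1 (pt S m).2

lemma cB_nonneg (t : ℕ) (m : Fin (d + 1)) : 0 ≤ cB S t m := Bpow_nonneg S t _ _

/-- the complex coefficient of `A_m` in `A_1 ^ t` -/
noncomputable def cC (t : ℕ) (m : Fin (d + 1)) : ℂ :=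
  ∑ j, ((S.P 1 j : ℂ) ^ t) * ((Fintype.card V : ℂ)⁻¹ * (S.Q j m : ℂ))

lemma A1_pow_repr (t : ℕ) : S.A 1 ^ t = ∑ m, cC S t m • S.A m := by
  rw [A1_pow]
  have : ∀ j : Fin (d+1), ((S.P 1 j : ℂ) ^ t) • S.E j
      = ∑ m, (((S.P 1 j : ℂ) ^ t) * ((Fintype.card V : ℂ)⁻¹ * (S.Q j m : ℂ))) • S.A m := by
    intro j
    rw [S.E_eq j, smul_smul, Finset.smul_sum]
    refine Finset.sum_congr rfl fun m _ => ?_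
    rw [smul_smul, mul_assoc]
  simp_rw [this]
  rw [Finset.sum_comm]
  refine Finset.sum_congr rfl fun m _ => ?_
  rw [cC, Finset.sum_smul]

lemma A1_pow_entry (t : ℕ) (x y : V) : (S.A 1 ^ t) x y = cC S t (rel S (x, y)) := by
  rw [A1_pow_repr, entry_sum_smul_A]

lemma cB_eq_cC (t : ℕ) (m : Fin (d + 1)) : ((cB S t m : ℝ) : ℂ) = cC S t m := by
  have h1 : ((B S ^ t).map (algebraMap ℝ ℂ)) (pt S m).1 (pt S m).2 = cC S t m := by
    rw [B_map_pow, A1_pow_entry, Prod.mk.eta, rel_pt]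
  rw [← h1, Matrix.map_apply]
  rfl

lemma Bpow_apply (t : ℕ) (x y : V) : (B S ^ t) x y = cB S t (rel S (x, y)) := by
  have h1 : ((B S ^ t) x y : ℂ) = cC S t (rel S (x, y)) := by
    have := congrArg (fun M : Matrix V V ℂ => M x y) (B_map_pow S t)
    simp only [Matrix.map_apply] at this
    rw [show ((algebraMap ℝ ℂ) ((B S ^ t) x y) : ℂ) = ((B S ^ t) x y : ℂ) from rfl] at this
    rw [this, A1_pow_entry]
  rw [← cB_eq_cC] at h1
  exact_mod_cast h1

lemma Bpow_repr (t : ℕ) : B S ^ t = ∑ m, cB S t m • Ar S m := by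
  ext x y
  rw [Bpow_apply, entry_sum_smul_Ar]

/-- `gam h m` : cumulated coefficient of `A_m` in `1 + B + ⋯ + B^h` -/
noncomputable def gam (h : ℕ) (m : Fin (d + 1)) : ℝ :=
  ∑ t ∈ Finset.range (h + 1), cB S t m

lemma gam_nonneg (h : ℕ) (m : Fin (d + 1)) : 0 ≤ gam S h m :=
  Finset.sum_nonneg fun t _ => cB_nonneg S t m

lemma gam_mono {h h' : ℕ} (hh : h ≤ h') (m : Fin (d + 1)) : gam S h m ≤ gam S h' m :=
  Finset.sum_le_sum_of_subset_of_nonneg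
    (Finset.range_subset_range.mpr (by omega)) (fun t _ _ => cB_nonneg S t m)

lemma cB_le_gam {t h : ℕ} (ht : t ≤ h) (m : Fin (d + 1)) : cB S t m ≤ gam S h m :=
  Finset.single_le_sum (fun t _ => cB_nonneg S t m) (Finset.mem_range.mpr (by omega))

noncomputable def rset (h : ℕ) : Finset (Fin (d + 1)) :=
  Finset.univ.filter (fun m => gam S h m ≠ 0)

lemma mem_rset {h : ℕ} {m : Fin (d + 1)} : m ∈ rset S h ↔ 0 < gam S h m := by
  rw [rset, Finset.mem_filter]
  constructor
  · rintro ⟨-, h2⟩; exact lt_of_le_of_ne (gam_nonneg S h m) (Ne.symm h2)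
  · intro h2; exact ⟨Finset.mem_univ m, ne_of_gt h2⟩

lemma rset_mono {h h' : ℕ} (hh : h ≤ h') : rset S h ⊆ rset S h' := by
  intro m hm
  rw [mem_rset] at hm ⊢
  exact lt_of_lt_of_le hm (gam_mono S hh m)

lemma cB_eq_zero_of_not_mem {t h : ℕ} (ht : t ≤ h) {m : Fin (d + 1)}
    (hm : m ∉ rset S h) : cB S t m = 0 := by
  rw [mem_rset, not_lt] at hm
  have h1 := cB_le_gam S ht m
  have h2 := cB_nonneg S t m
  linarith

lemma mem_rset_of_cB {t h : ℕ} (ht : t ≤ h) {m : Fin (d + 1)}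
    (hm : cB S t m ≠ 0) : m ∈ rset S h := by
  by_contra h2
  exact hm (cB_eq_zero_of_not_mem S ht h2)

lemma pt_zero_diag : (pt S 0).1 = (pt S 0).2 := by
  have := pt_mem S 0
  rw [S.R_zero] at this
  exact this

lemma pt_ne_diag {m : Fin (d + 1)} (hm : m ≠ 0) : (pt S m).1 ≠ (pt S m).2 := by
  intro h
  have h2 : pt S m ∈ S.R 0 := by rw [S.R_zero]; exact h
  exact not_mem_of_ne S hm h2 (pt_mem S m)

lemma cB_zero (m : Fin (d + 1)) : cB S 0 m = if m = 0 then 1 else 0 := by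
  rw [cB, pow_zero]
  rcases eq_or_ne m 0 with rfl | h
  · simp [Matrix.one_apply, pt_zero_diag S]
  · simp [Matrix.one_apply, pt_ne_diag S h, h]

lemma cB_one (m : Fin (d + 1)) : cB S 1 m = if m = 1 then 1 else 0 := by
  rw [cB, pow_one]
  rw [show B S = Ar S 1 from rfl, Ar_pt]
  split <;> simp_all [eq_comm]

lemma rset_zero : rset S 0 = {0} := by
  ext m
  rw [mem_rset, Finset.mem_singleton, gam, Finset.sum_range_one, cB_zero]
  split <;> simp_all

lemma rset_one : rset S 1 = {0, 1} := by
  ext m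
  rw [mem_rset, Finset.mem_insert, Finset.mem_singleton, gam,
    Finset.sum_range_succ, Finset.sum_range_one, cB_zero, cB_one]
  constructor
  · intro h
    by_contra hc
    push_neg at hc
    rw [if_neg hc.1, if_neg hc.2] at h
    norm_num at h
  · rintro (rfl | rfl)
    · rw [if_pos rfl]
      have : (0:ℝ) ≤ if (0 : Fin (d+1)) = 1 then 1 else 0 := by split <;> norm_num
      linarith
    · rw [if_pos rfl]
      have : (0:ℝ) ≤ if (1 : Fin (d+1)) = 0 then 1 else 0 := by split <;> norm_num
      linarith

lemma aevalB_map (g : Polynomial ℝ) :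
    (Polynomial.aeval (B S) g).map (algebraMap ℝ ℂ)
      = Polynomial.aeval (S.A 1) (g.map (algebraMap ℝ ℂ)) := by
  rw [Polynomial.aeval_map_algebraMap, ← Ar_map S 1]
  exact (Polynomial.aeval_algHom_apply ((Algebra.ofId ℝ ℂ).mapMatrix) (B S) g).symm

lemma eval_map_ofReal (g : Polynomial ℝ) (x : ℝ) :
    (g.map (algebraMap ℝ ℂ)).eval ((x : ℝ) : ℂ) = ((g.eval x : ℝ) : ℂ) := by
  rw [Polynomial.eval_map]
  exact Polynomial.eval₂_at_apply (algebraMap ℝ ℂ) x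

lemma aeval_A1_map (g : Polynomial ℝ) :
    Polynomial.aeval (S.A 1) (g.map (algebraMap ℝ ℂ))
      = ∑ j, ((g.eval (S.P 1 j) : ℝ) : ℂ) • S.E j := by
  rw [aeval_A1]
  exact Finset.sum_congr rfl fun j _ => by rw [eval_map_ofReal]

end S13

namespace S13

open Polynomial
open scoped Classical

noncomputable def pOf {n : ℕ} (c : Fin n → ℝ) : Polynomial ℝ :=
  ∑ t, Polynomial.C (c t) * Polynomial.X ^ (t : ℕ)

lemma pOf_eval {n : ℕ} (c : Fin n → ℝ) (x : ℝ) :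
    (pOf c).eval x = ∑ t, c t * x ^ (t : ℕ) := by
  rw [pOf, Polynomial.eval_finset_sum]
  simp

lemma pOf_coeff {n : ℕ} (c : Fin n → ℝ) (t : Fin n) : (pOf c).coeff (t : ℕ) = c t := by
  rw [pOf, Polynomial.finset_sum_coeff]
  rw [Finset.sum_eq_single t]
  · simp
  · intro b _ hb
    rw [Polynomial.coeff_C_mul, Polynomial.coeff_X_pow,
      if_neg (fun h => hb (Fin.ext h.symm)), mul_zero]
  · intro h; exact absurd (Finset.mem_univ t) h

lemma pOf_degree_lt {n : ℕ} (c : Fin n → ℝ) : (pOf c).degree < (n : ℕ) := by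
  apply lt_of_le_of_lt (Polynomial.degree_sum_le _ _)
  rw [Finset.sup_lt_iff (by exact WithBot.bot_lt_coe n)]
  intro t _
  apply lt_of_le_of_lt (Polynomial.degree_C_mul_X_pow_le _ _)
  exact_mod_cast t.isLt

lemma pOf_natDegree_lt {n : ℕ} (hn : 0 < n) (c : Fin n → ℝ) : (pOf c).natDegree < n := by
  rcases eq_or_ne (pOf c) 0 with h | h
  · rw [h]; simpa using hn
  · rw [Polynomial.natDegree_lt_iff_degree_lt h]
    exact pOf_degree_lt c

lemma pOf_aeval {n : ℕ} (c : Fin n → ℝ) {A : Type*} [Semiring A] [Algebra ℝ A] (x : A) :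
    Polynomial.aeval x (pOf c) = ∑ t, c t • x ^ (t : ℕ) := by
  rw [pOf, map_sum]
  refine Finset.sum_congr rfl fun t _ => ?_
  rw [_root_.map_mul, Polynomial.aeval_C, map_pow, Polynomial.aeval_X, Algebra.smul_def]

variable {d : ℕ} {V : Type*} [Fintype V] [DecidableEq V] (S : SymmAssocScheme d V)

lemma powsB_li (hθ : Function.Injective fun j : Fin (d + 1) => S.P 1 j) {h : ℕ} (hh : h ≤ d) :
    LinearIndependent ℝ (fun t : Fin (h + 1) => B S ^ (t : ℕ)) := by
  rw [Fintype.linearIndependent_iff]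
  intro c hc t
  have e1 : Polynomial.aeval (B S) (pOf c) = 0 := by rw [pOf_aeval]; exact hc
  have hc' : ∑ j, (((pOf c).eval (S.P 1 j) : ℝ) : ℂ) • S.E j = ∑ j, (0 : ℂ) • S.E j := by
    rw [← aeval_A1_map, ← aevalB_map, e1]
    simp
  have h0 := E_coeff_ext S hc'
  have heval : ∀ j, (pOf c).eval (S.P 1 j) = 0 := by
    intro j
    have := h0 j
    exact_mod_cast this
  have hp0 : pOf c = 0 := by
    apply Polynomial.eq_zero_of_natDegree_lt_card_of_eval_eq_zero (pOf c) hθ heval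
    calc (pOf c).natDegree < h + 1 := pOf_natDegree_lt (by omega) c
      _ ≤ d + 1 := by omega
      _ = Fintype.card (Fin (d + 1)) := by simp
  have h2 := pOf_coeff c t
  rw [hp0] at h2
  simpa using h2.symm

lemma rset_step {h : ℕ} (hst : rset S (h + 1) ⊆ rset S h) :
    rset S (h + 2) ⊆ rset S (h + 1) := by
  intro m hm
  by_contra hm1
  have hsplit : gam S (h + 2) m = gam S (h + 1) m + cB S (h + 2) m := by
    rw [gam, gam, Finset.sum_range_succ]
  have hg1 : gam S (h + 1) m = 0 := by
    rw [mem_rset, not_lt] at hm1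
    linarith [gam_nonneg S (h + 1) m]
  have hB : 0 < cB S (h + 2) m := by
    rw [mem_rset] at hm
    rcases lt_or_eq_of_le (cB_nonneg S (h + 2) m) with h' | h'
    · exact h'
    · exfalso; rw [hsplit, hg1, ← h'] at hm; norm_num at hm
  have hx : 0 < (B S ^ (h + 2)) (pt S m).1 (pt S m).2 := hB
  rw [pow_succ', Matrix.mul_apply] at hx
  obtain ⟨z, -, hz⟩ : ∃ z ∈ Finset.univ, B S (pt S m).1 z * (B S ^ (h + 1)) z (pt S m).2 ≠ 0 := by
    by_contra hcon
    push_neg at hcon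
    rw [Finset.sum_eq_zero (fun z hz => hcon z hz)] at hx
    norm_num at hx
  obtain ⟨hz1, hz2⟩ := mul_ne_zero_iff.mp hz
  have hBxz : 0 < B S (pt S m).1 z := by
    have h9 := Bpow_nonneg S 1 (pt S m).1 z
    rw [pow_one] at h9
    exact lt_of_le_of_ne h9 (Ne.symm hz1)
  set k := rel S (z, (pt S m).2) with hk_def
  have hk : k ∈ rset S h := by
    apply hst
    apply mem_rset_of_cB S (le_refl (h + 1))
    rw [← Bpow_apply]
    exact hz2
  obtain ⟨t, ht, hct⟩ : ∃ t ∈ Finset.range (h + 1), cB S t k ≠ 0 := by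
    by_contra hcon
    push_neg at hcon
    have h9 : gam S h k = 0 := Finset.sum_eq_zero hcon
    rw [mem_rset, h9] at hk
    norm_num at hk
  have hBt : 0 < (B S ^ t) z (pt S m).2 := by
    rw [Bpow_apply, ← hk_def]
    exact lt_of_le_of_ne (by rw [hk_def, ← Bpow_apply]; exact Bpow_nonneg S t _ _) (Ne.symm hct)
  have hle : B S (pt S m).1 z * (B S ^ t) z (pt S m).2 ≤ (B S ^ (t + 1)) (pt S m).1 (pt S m).2 := by
    rw [pow_succ', Matrix.mul_apply]
    exact Finset.single_le_sum (f := fun z' => B S (pt S m).1 z' * (B S ^ t) z' (pt S m).2)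
      (fun z' _ => mul_nonneg (by
        have h9 := Bpow_nonneg S 1 (pt S m).1 z'
        rwa [pow_one] at h9) (Bpow_nonneg S t z' _)) (Finset.mem_univ z)
  have hpos : 0 < (B S ^ (t + 1)) (pt S m).1 (pt S m).2 :=
    lt_of_lt_of_le (mul_pos hBxz hBt) hle
  have hmem : m ∈ rset S (h + 1) := by
    apply mem_rset_of_cB S (show t + 1 ≤ h + 1 by have := Finset.mem_range.mp ht; omega)
    exact ne_of_gt hpos
  exact hm1 hmem

lemma rset_stab {h : ℕ} (hst : rset S (h + 1) ⊆ rset S h) :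
    ∀ k, h ≤ k → rset S k ⊆ rset S h := by
  have step : ∀ j : ℕ, rset S (h + j + 1) ⊆ rset S (h + j) := by
    intro j
    induction j with
    | zero => exact hst
    | succ j ih => exact rset_step S ih
  have chain : ∀ j : ℕ, rset S (h + j) ⊆ rset S h := by
    intro j
    induction j with
    | zero => exact fun m hm => hm
    | succ j ih => exact fun m hm => ih (step j hm)
  intro k hk
  obtain ⟨j, rfl⟩ := Nat.exists_eq_add_of_le hk
  exact chain j

noncomputable def ellp (j : Fin (d + 1)) : Polynomial ℝ :=
  Polynomial.C (∏ k ∈ Finset.univ.filter (· ≠ j), (S.P 1 j - S.P 1 k))⁻¹ *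
    ∏ k ∈ Finset.univ.filter (· ≠ j), (Polynomial.X - Polynomial.C (S.P 1 k))

lemma ellp_eval (hθ : Function.Injective fun j : Fin (d + 1) => S.P 1 j) (j i : Fin (d + 1)) :
    (ellp S j).eval (S.P 1 i) = if i = j then 1 else 0 := by
  rw [ellp, Polynomial.eval_mul, Polynomial.eval_C, Polynomial.eval_prod]
  simp only [Polynomial.eval_sub, Polynomial.eval_X, Polynomial.eval_C]
  rcases eq_or_ne i j with rfl | h
  · rw [if_pos rfl, inv_mul_cancel₀]
    apply Finset.prod_ne_zero_iff.mpr
    intro k hk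
    rw [Finset.mem_filter] at hk
    exact sub_ne_zero.mpr (fun hcon => hk.2 (hθ hcon).symm)
  · rw [if_neg h]
    have hz : ∏ k ∈ Finset.univ.filter (fun x => x ≠ j), (S.P 1 i - S.P 1 k) = 0 :=
      Finset.prod_eq_zero (Finset.mem_filter.mpr ⟨Finset.mem_univ i, h⟩) (sub_self _)
    rw [hz, mul_zero]

lemma card_filter_ne (j : Fin (d + 1)) :
    (Finset.univ.filter (· ≠ j) : Finset (Fin (d + 1))).card = d := by
  rw [Finset.filter_ne', Finset.card_erase_of_mem (Finset.mem_univ j), Finset.card_univ]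
  simp

lemma ellp_natDegree_le (j : Fin (d + 1)) : (ellp S j).natDegree ≤ d := by
  rw [ellp]
  refine le_trans (Polynomial.natDegree_mul_le) ?_
  rw [Polynomial.natDegree_C, zero_add]
  refine le_trans (Polynomial.natDegree_prod_le _ _) (le_of_eq ?_)
  have h9 : ∀ k ∈ Finset.univ.filter (fun x => x ≠ j),
      (Polynomial.X - Polynomial.C (S.P 1 k)).natDegree = 1 :=
    fun k _ => Polynomial.natDegree_X_sub_C _
  rw [Finset.sum_congr rfl h9, Finset.sum_const, smul_eq_mul, mul_one, card_filter_ne]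

noncomputable def gm (m : Fin (d + 1)) : Polynomial ℝ :=
  ∑ j, Polynomial.C (S.P m j) * ellp S j

lemma gm_eval (hθ : Function.Injective fun j : Fin (d + 1) => S.P 1 j) (m i : Fin (d + 1)) :
    (gm S m).eval (S.P 1 i) = S.P m i := by
  rw [gm, Polynomial.eval_finset_sum]
  simp_rw [Polynomial.eval_mul, Polynomial.eval_C, ellp_eval S hθ]
  simp

lemma gm_natDegree_lt (m : Fin (d + 1)) : (gm S m).natDegree < d + 1 := by
  have h1 : (gm S m).natDegree ≤ d := by
    apply Polynomial.natDegree_sum_le_of_forall_le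
    intro j _
    refine le_trans (Polynomial.natDegree_mul_le) ?_
    rw [Polynomial.natDegree_C, zero_add]
    exact ellp_natDegree_le S j
  omega

lemma rset_d (hθ : Function.Injective fun j : Fin (d + 1) => S.P 1 j) :
    rset S d = Finset.univ := by
  apply Finset.eq_univ_of_forall
  intro m
  have h1 : Polynomial.aeval (B S) (gm S m) = Ar S m := by
    have h2 : (Polynomial.aeval (B S) (gm S m)).map (algebraMap ℝ ℂ)
        = (Ar S m).map (algebraMap ℝ ℂ) := by
      rw [aevalB_map, aeval_A1_map, Ar_map]
      conv_rhs => rw [S.A_eq m]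
      refine Finset.sum_congr rfl fun j _ => ?_
      rw [gm_eval S hθ]
    ext x y
    have h3 := congrArg (fun M : Matrix V V ℂ => M x y) h2
    simpa using h3
  have h3 : (Polynomial.aeval (B S) (gm S m)) (pt S m).1 (pt S m).2 = 1 := by
    rw [h1, Ar_pt, if_pos rfl]
  rw [Polynomial.aeval_eq_sum_range' (gm_natDegree_lt S m), Matrix.sum_apply] at h3
  rw [mem_rset]
  by_contra hcon
  rw [not_lt] at hcon
  have hg0 : gam S d m = 0 := le_antisymm hcon (gam_nonneg S d m)
  have h4 : ∀ t ∈ Finset.range (d + 1),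
      ((gm S m).coeff t • B S ^ t) (pt S m).1 (pt S m).2 = 0 := by
    intro t ht
    have ht' := Finset.mem_range.mp ht
    rw [Matrix.smul_apply]
    have h5 : cB S t m = 0 := by
      have h6 := cB_le_gam S (show t ≤ d by omega) m
      have h7 := cB_nonneg S t m
      linarith
    rw [show (B S ^ t) (pt S m).1 (pt S m).2 = cB S t m from rfl, h5, smul_zero]
  rw [Finset.sum_eq_zero h4] at h3
  norm_num at h3

lemma card_rset_ge (hθ : Function.Injective fun j : Fin (d + 1) => S.P 1 j) :
    ∀ h, h ≤ d → h + 1 ≤ (rset S h).card := by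
  intro h
  induction h with
  | zero => intro _; rw [rset_zero]; simp
  | succ h ih =>
    intro hh
    have ihc := ih (by omega)
    rcases eq_or_ne (rset S h) Finset.univ with hu | hu
    · have h1 : (Finset.univ : Finset (Fin (d + 1))) ⊆ rset S (h + 1) := by
        rw [← hu]; exact rset_mono S (by omega)
      have h2 := Finset.univ_subset_iff.mp h1
      rw [h2, Finset.card_univ, Fintype.card_fin]
      omega
    · have hstrict : ¬ rset S (h + 1) ⊆ rset S h := by
        intro hsub
        have h1 := rset_stab S hsub d (by omega)
        rw [rset_d S hθ] at h1
        exact hu (Finset.univ_subset_iff.mp h1)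
      have hss : rset S h ⊂ rset S (h + 1) := ⟨rset_mono S (by omega), hstrict⟩
      have := Finset.card_lt_card hss
      omega

noncomputable def fI (i : Fin (d + 1)) : Polynomial ℝ :=
  ∏ j ∈ Finset.univ.filter (fun j => j ≠ 0 ∧ j ≠ i), (Polynomial.X - Polynomial.C (S.P 1 j))

lemma fI_eval (i k : Fin (d + 1)) : (fI S i).eval (S.P 1 k)
    = ∏ j ∈ Finset.univ.filter (fun j => j ≠ 0 ∧ j ≠ i), (S.P 1 k - S.P 1 j) := by
  rw [fI, Polynomial.eval_prod]
  simp

lemma fI_eval_zero {i k : Fin (d + 1)} (hk0 : k ≠ 0) (hki : k ≠ i) :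
    (fI S i).eval (S.P 1 k) = 0 := by
  rw [fI_eval]
  exact Finset.prod_eq_zero (Finset.mem_filter.mpr ⟨Finset.mem_univ k, hk0, hki⟩) (sub_self _)

lemma fI_eval_self_ne (hθ : Function.Injective fun j : Fin (d + 1) => S.P 1 j)
    (i : Fin (d + 1)) : (fI S i).eval (S.P 1 i) ≠ 0 := by
  rw [fI_eval]
  apply Finset.prod_ne_zero_iff.mpr
  intro j hj
  rw [Finset.mem_filter] at hj
  exact sub_ne_zero.mpr fun hcon => hj.2.2 (hθ hcon).symm

lemma fI_natDegree_lt (hd1 : 1 ≤ d) {i : Fin (d + 1)} (hi : i ≠ 0) :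
    (fI S i).natDegree < d := by
  have hsub : Finset.univ.filter (fun j => j ≠ 0 ∧ j ≠ i)
      ⊆ ((Finset.univ : Finset (Fin (d + 1))).erase 0).erase i := by
    intro j hj
    rw [Finset.mem_filter] at hj
    exact Finset.mem_erase.mpr ⟨hj.2.2, Finset.mem_erase.mpr ⟨hj.2.1, Finset.mem_univ j⟩⟩
  have hcard : (Finset.univ.filter (fun j => j ≠ 0 ∧ j ≠ i) : Finset (Fin (d+1))).card ≤ d - 1 := by
    refine le_trans (Finset.card_le_card hsub) ?_
    rw [Finset.card_erase_of_mem (Finset.mem_erase.mpr ⟨hi, Finset.mem_univ i⟩),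
      Finset.card_erase_of_mem (Finset.mem_univ 0), Finset.card_univ, Fintype.card_fin]
    omega
  have h1 : (fI S i).natDegree ≤ d - 1 := by
    rw [fI]
    refine le_trans (Polynomial.natDegree_prod_le _ _) ?_
    have h9 : ∀ k ∈ Finset.univ.filter (fun j => j ≠ 0 ∧ j ≠ i),
        (Polynomial.X - Polynomial.C (S.P 1 k)).natDegree = 1 :=
      fun k _ => Polynomial.natDegree_X_sub_C _
    rw [Finset.sum_congr rfl h9, Finset.sum_const, smul_eq_mul, mul_one]
    exact hcard
  omega

lemma fI_degree_lt (hd1 : 1 ≤ d) {i : Fin (d + 1)} (hi : i ≠ 0) :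
    (fI S i).degree < (d : ℕ) :=
  lt_of_le_of_lt (Polynomial.degree_le_natDegree)
    (by exact_mod_cast fI_natDegree_lt S hd1 hi)

lemma key_iff (hθ : Function.Injective fun j : Fin (d + 1) => S.P 1 j)
    {i : Fin (d + 1)} (hi : i ≠ 0) (m : Fin (d + 1)) :
    ((∏ j ∈ Finset.univ.filter (fun j => j ≠ 0 ∧ j ≠ i),
        (S.P 1 0 - S.P 1 j) / (S.P 1 i - S.P 1 j)) = -S.Q i m)
      ↔ (Polynomial.aeval (B S) (fI S i)) (pt S m).1 (pt S m).2 = 0 := by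
  have hKeq : (∏ j ∈ Finset.univ.filter (fun j => j ≠ 0 ∧ j ≠ i),
      (S.P 1 0 - S.P 1 j) / (S.P 1 i - S.P 1 j))
        = (fI S i).eval (S.P 1 0) / (fI S i).eval (S.P 1 i) := by
    rw [fI_eval, fI_eval, Finset.prod_div_distrib]
  have h1 : Polynomial.aeval (S.A 1) ((fI S i).map (algebraMap ℝ ℂ))
      = (((fI S i).eval (S.P 1 0) : ℝ) : ℂ) • S.E 0
        + (((fI S i).eval (S.P 1 i) : ℝ) : ℂ) • S.E i := by
    rw [aeval_A1_map]
    rw [← Finset.sum_subset (Finset.subset_univ ({0, i} : Finset (Fin (d + 1))))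
      (fun j _ hj => ?_)]
    · rw [Finset.sum_pair (Ne.symm hi)]
    · rw [Finset.mem_insert, Finset.mem_singleton] at hj
      push_neg at hj
      rw [fI_eval_zero S hj.1 hj.2]
      simp
  have hent : (((Polynomial.aeval (B S) (fI S i)) (pt S m).1 (pt S m).2 : ℝ) : ℂ)
      = (Fintype.card V : ℂ)⁻¹ * ((((fI S i).eval (S.P 1 0) : ℝ) : ℂ)
          + (((fI S i).eval (S.P 1 i) : ℝ) : ℂ) * (S.Q i m : ℂ)) := by
    have h3 := congrArg (fun M : Matrix V V ℂ => M (pt S m).1 (pt S m).2)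
      (aevalB_map S (fI S i))
    simp only [Matrix.map_apply] at h3
    rw [h1] at h3
    rw [Matrix.add_apply, Matrix.smul_apply, Matrix.smul_apply, E_entry, E_entry,
      Prod.mk.eta, rel_pt, Q_zero] at h3
    rw [show (algebraMap ℝ ℂ) ((Polynomial.aeval (B S) (fI S i)) (pt S m).1 (pt S m).2)
      = (((Polynomial.aeval (B S) (fI S i)) (pt S m).1 (pt S m).2 : ℝ) : ℂ) from rfl] at h3
    rw [h3]
    simp only [smul_eq_mul]
    push_cast
    ring
  have hci : (fI S i).eval (S.P 1 i) ≠ 0 := fI_eval_self_ne S hθ i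
  rw [hKeq]
  constructor
  · intro hK
    rw [div_eq_iff hci] at hK
    have h4 : (((Polynomial.aeval (B S) (fI S i)) (pt S m).1 (pt S m).2 : ℝ) : ℂ) = 0 := by
      rw [hent, hK]
      push_cast
      ring
    exact_mod_cast h4
  · intro h0
    have h4 : (Fintype.card V : ℂ)⁻¹ * ((((fI S i).eval (S.P 1 0) : ℝ) : ℂ)
        + (((fI S i).eval (S.P 1 i) : ℝ) : ℂ) * (S.Q i m : ℂ)) = 0 := by
      rw [← hent, h0]
      norm_num
    have h5 : (((fI S i).eval (S.P 1 0) : ℝ) : ℂ)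
        + (((fI S i).eval (S.P 1 i) : ℝ) : ℂ) * (S.Q i m : ℂ) = 0 := by
      rcases mul_eq_zero.mp h4 with h | h
      · exact absurd h (inv_ne_zero (n_ne_zero S))
      · exact h
    have h6 : (fI S i).eval (S.P 1 0) + (fI S i).eval (S.P 1 i) * S.Q i m = 0 := by
      exact_mod_cast h5
    rw [div_eq_iff hci]
    linear_combination h6

lemma span_poly_step (n : ℕ) (w : ℕ → Polynomial ℝ) (hw : ∀ k < n, (w k).degree = (k : ℕ))
    {g : Polynomial ℝ} (hg : g.degree < (n : ℕ)) (hg0 : g ≠ 0) :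
    ∃ q ∈ Submodule.span ℝ (w '' Set.Iio n), (g - q).degree < g.degree := by
  set k := g.natDegree with hk_def
  have hk : k < n := by
    have h2 := Polynomial.degree_eq_natDegree hg0
    rw [h2] at hg
    exact_mod_cast hg
  have hwk := hw k hk
  have hwk0 : w k ≠ 0 := by
    intro h
    rw [h, Polynomial.degree_zero] at hwk
    exact absurd hwk.symm (by simp)
  have hlcw : (w k).leadingCoeff ≠ 0 := Polynomial.leadingCoeff_ne_zero.mpr hwk0
  have hlcg : g.leadingCoeff ≠ 0 := Polynomial.leadingCoeff_ne_zero.mpr hg0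
  set c := g.leadingCoeff / (w k).leadingCoeff with hc_def
  have hc0 : c ≠ 0 := div_ne_zero hlcg hlcw
  refine ⟨Polynomial.C c * w k, ?_, ?_⟩
  · rw [← Polynomial.smul_eq_C_mul]
    exact Submodule.smul_mem _ _ (Submodule.subset_span ⟨k, hk, rfl⟩)
  · apply Polynomial.degree_sub_lt
    · rw [Polynomial.degree_mul, Polynomial.degree_C hc0, hwk,
        Polynomial.degree_eq_natDegree hg0, zero_add]
    · exact hg0
    · rw [Polynomial.leadingCoeff_mul, Polynomial.leadingCoeff_C, hc_def,
        div_mul_cancel₀ _ hlcw]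

lemma span_poly (n : ℕ) (w : ℕ → Polynomial ℝ) (hw : ∀ k < n, (w k).degree = (k : ℕ)) :
    ∀ g : Polynomial ℝ, g.degree < (n : ℕ) → g ∈ Submodule.span ℝ (w '' Set.Iio n) := by
  suffices h : ∀ N : ℕ, ∀ g : Polynomial ℝ, g.degree < (n : ℕ) → g.natDegree ≤ N →
      g ∈ Submodule.span ℝ (w '' Set.Iio n) by
    exact fun g hg => h g.natDegree g hg le_rfl
  intro N
  induction N with
  | zero =>
    intro g hg hN
    rcases eq_or_ne g 0 with rfl | hg0
    · exact Submodule.zero_mem _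
    obtain ⟨q, hq, hlt⟩ := span_poly_step n w hw hg hg0
    have hdeg : g.degree = (0 : ℕ) := by
      rw [Polynomial.degree_eq_natDegree hg0, Nat.le_zero.mp hN]
    rw [hdeg] at hlt
    have h0 : g - q = 0 := by
      rw [← Polynomial.degree_eq_bot]
      exact Nat.WithBot.lt_zero_iff.mp (by exact_mod_cast hlt)
    have : g = q := by linear_combination h0
    rw [this]
    exact hq
  | succ N ih =>
    intro g hg hN
    rcases eq_or_ne g 0 with rfl | hg0
    · exact Submodule.zero_mem _
    obtain ⟨q, hq, hlt⟩ := span_poly_step n w hw hg hg0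
    have h2 : (g - q).natDegree ≤ N := by
      rcases eq_or_ne (g - q) 0 with h | h
      · rw [h]; simp
      · have h3 := Polynomial.natDegree_lt_natDegree h hlt
        omega
    have h4 : (g - q).degree < (n : ℕ) := lt_trans hlt hg
    have h5 := ih (g - q) h4 h2
    have h6 : g = (g - q) + q := by ring
    rw [h6]
    exact Submodule.add_mem _ h5 hq

lemma entry_zero_of_mem_span_poly {s : Set (Polynomial ℝ)} {g : Polynomial ℝ}
    (hg : g ∈ Submodule.span ℝ s) (x y : V)
    (hs : ∀ p ∈ s, (Polynomial.aeval (B S) p) x y = 0) :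
    (Polynomial.aeval (B S) g) x y = 0 := by
  induction hg using Submodule.span_induction with
  | mem p hp => exact hs p hp
  | zero => simp
  | add p q hp hq ihp ihq => rw [map_add, Matrix.add_apply, ihp, ihq, add_zero]
  | smul c p hp ihp => rw [_root_.map_smul, Matrix.smul_apply, ihp, smul_zero]

lemma entry_zero_of_mem_span_Ar {s : Set (Fin (d + 1))} {M : Matrix V V ℝ}
    (hM : M ∈ Submodule.span ℝ ((fun m => Ar S m) '' s)) {k : Fin (d + 1)} (hk : k ∉ s) :
    M (pt S k).1 (pt S k).2 = 0 := by
  induction hM using Submodule.span_induction with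
  | mem N hN =>
    obtain ⟨m, hm, rfl⟩ := hN
    show Ar S m (pt S k).1 (pt S k).2 = 0
    rw [Ar_pt, if_neg]
    rintro rfl
    exact hk hm
  | zero => simp
  | add p q hp hq ihp ihq => rw [Matrix.add_apply, ihp, ihq, add_zero]
  | smul c p hp ihp => rw [Matrix.smul_apply, ihp, smul_zero]

lemma interp (hθ : Function.Injective fun j : Fin (d + 1) => S.P 1 j) (hd1 : 1 ≤ d)
    (g : Polynomial ℝ) (hg : g.degree < (d : ℕ)) :
    g = ∑ i ∈ Finset.univ.filter (fun i => i ≠ 0),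
      (g.eval (S.P 1 i) / (fI S i).eval (S.P 1 i)) • fI S i := by
  set q := ∑ i ∈ Finset.univ.filter (fun i : Fin (d + 1) => i ≠ 0),
      (g.eval (S.P 1 i) / (fI S i).eval (S.P 1 i)) • fI S i with hq_def
  have hqdeg : q.degree < (d : ℕ) := by
    apply lt_of_le_of_lt (Polynomial.degree_sum_le _ _)
    rw [Finset.sup_lt_iff (by exact WithBot.bot_lt_coe d)]
    intro i hi
    exact lt_of_le_of_lt (Polynomial.degree_smul_le _ _)
      (fI_degree_lt S hd1 (Finset.mem_filter.mp hi).2)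
  have heval : ∀ k : Fin (d + 1), k ≠ 0 → (g - q).eval (S.P 1 k) = 0 := by
    intro k hk
    rw [Polynomial.eval_sub, hq_def, Polynomial.eval_finset_sum]
    have h2 : ∀ i ∈ Finset.univ.filter (fun i : Fin (d + 1) => i ≠ 0),
        ((g.eval (S.P 1 i) / (fI S i).eval (S.P 1 i)) • fI S i).eval (S.P 1 k)
          = if i = k then g.eval (S.P 1 k) else 0 := by
      intro i hi
      rw [Polynomial.eval_smul, smul_eq_mul]
      rcases eq_or_ne i k with rfl | hik
      · rw [if_pos rfl, div_mul_cancel₀ _ (fI_eval_self_ne S hθ i)]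
      · rw [if_neg hik, fI_eval_zero S hk (Ne.symm hik), mul_zero]
    rw [Finset.sum_congr rfl h2, Finset.sum_ite_eq' _ k,
      if_pos (Finset.mem_filter.mpr ⟨Finset.mem_univ k, hk⟩), sub_self]
  have hzero : g - q = 0 := by
    rcases eq_or_ne (g - q) 0 with h0 | h0
    · exact h0
    apply Polynomial.eq_zero_of_natDegree_lt_card_of_eval_eq_zero' (g - q)
      ((Finset.univ.filter (fun i : Fin (d + 1) => i ≠ 0)).image (fun i => S.P 1 i))
    · intro xv hxv
      obtain ⟨k, hk, rfl⟩ := Finset.mem_image.mp hxv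
      exact heval k (Finset.mem_filter.mp hk).2
    · rw [Finset.card_image_of_injective _ hθ]
      have hc1 : (Finset.univ.filter (fun i : Fin (d + 1) => i ≠ 0)).card = d :=
        card_filter_ne 0
      rw [hc1]
      have hdlt : (g - q).degree < (d : ℕ) :=
        lt_of_le_of_lt (Polynomial.degree_sub_le _ _) (max_lt hg hqdeg)
      rwa [← Polynomial.natDegree_lt_iff_degree_lt h0] at hdlt
  linear_combination hzero

lemma two_le_val {n : ℕ} (hn : 1 ≤ n) {m : Fin (n + 1)} (h0 : m ≠ 0) (h1 : m ≠ 1) :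
    2 ≤ (m : ℕ) := by
  have e0 : ((0 : Fin (n + 1)) : ℕ) = 0 := rfl
  have e1 : ((1 : Fin (n + 1)) : ℕ) = 1 := by
    rw [Fin.val_one']; exact Nat.mod_eq_of_lt (by omega)
  have h0' : (m : ℕ) ≠ 0 := by
    intro h; exact h0 (Fin.ext (by rw [e0]; omega))
  have h1' : (m : ℕ) ≠ 1 := by
    intro h; exact h1 (Fin.ext (by rw [e1]; omega))
  omega

lemma PQ_rel (i k : Fin (d + 1)) : (if i = k then (1 : ℂ) else 0)
    = (Fintype.card V : ℂ)⁻¹ * ∑ j, (S.P i j : ℂ) * (S.Q j k : ℂ) := by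
  have h1 : S.A i = ∑ m, ((Fintype.card V : ℂ)⁻¹ * ∑ j, (S.P i j : ℂ) * (S.Q j m : ℂ)) • S.A m := by
    conv_lhs => rw [S.A_eq i]
    have h2 : ∀ j : Fin (d + 1), (S.P i j : ℂ) • S.E j
        = ∑ m, ((S.P i j : ℂ) * ((Fintype.card V : ℂ)⁻¹ * (S.Q j m : ℂ))) • S.A m := by
      intro j
      rw [S.E_eq j, smul_smul, Finset.smul_sum]
      refine Finset.sum_congr rfl fun m _ => ?_
      rw [smul_smul, mul_assoc]
    simp_rw [h2]
    rw [Finset.sum_comm]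
    refine Finset.sum_congr rfl fun m _ => ?_
    rw [Finset.mul_sum, Finset.sum_smul]
    refine Finset.sum_congr rfl fun j _ => ?_
    ring_nf
  have h2 := congrArg (fun M : Matrix V V ℂ => M (pt S k).1 (pt S k).2) h1
  rw [A_pt, entry_sum_smul_A S _ (pt S k).1 (pt S k).2, Prod.mk.eta, rel_pt] at h2
  exact h2

lemma Q_col_inj {l l' : Fin (d + 1)} (hQ : ∀ j, S.Q j l = S.Q j l') : l = l' := by
  have h1 := PQ_rel S l l
  have h2 := PQ_rel S l l'
  have h3 : ∑ j, (S.P l j : ℂ) * (S.Q j l : ℂ) = ∑ j, (S.P l j : ℂ) * (S.Q j l' : ℂ) :=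
    Finset.sum_congr rfl fun j _ => by rw [hQ j]
  rw [← h3, ← h1] at h2
  by_contra hne
  rw [if_neg hne] at h2
  simp at h2

lemma forward_main (hd : 2 ≤ d) (hθ : Function.Injective fun j : Fin (d + 1) => S.P 1 j)
    (σ : Equiv.Perm (Fin (d + 1))) (h0 : σ 0 = 0) (h1 : σ 1 = 1)
    (hord : S.IsPPolyOrdering σ) :
    2 ≤ ((σ (Fin.last d)) : ℕ) ∧
      ∀ i : Fin (d + 1), i ≠ 0 →
        (∏ j ∈ Finset.univ.filter (fun j => j ≠ 0 ∧ j ≠ i),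
          (S.P 1 0 - S.P 1 j) / (S.P 1 i - S.P 1 j)) = -S.Q i (σ (Fin.last d)) := by
  choose vh hdeg hval using hord
  have e0 : ((0 : Fin (d + 1)) : ℕ) = 0 := rfl
  have e1 : ((1 : Fin (d + 1)) : ℕ) = 1 := by
    rw [Fin.val_one']; exact Nat.mod_eq_of_lt (by omega)
  have hlast0 : Fin.last d ≠ 0 := by
    intro h
    have h' : (Fin.last d : ℕ) = ((0 : Fin (d + 1)) : ℕ) := congrArg Fin.val h
    rw [Fin.val_last, e0] at h'
    omega
  have hlast1 : Fin.last d ≠ 1 := by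
    intro h
    have h' : (Fin.last d : ℕ) = ((1 : Fin (d + 1)) : ℕ) := congrArg Fin.val h
    rw [Fin.val_last, e1] at h'
    omega
  have hσ0 : σ (Fin.last d) ≠ 0 := by
    rw [← h0]
    exact fun h => hlast0 (σ.injective h)
  have hσ1 : σ (Fin.last d) ≠ 1 := by
    rw [← h1]
    exact fun h => hlast1 (σ.injective h)
  refine ⟨two_le_val (by omega) hσ0 hσ1, ?_⟩
  intro i hi
  have hA : ∀ h : Fin (d + 1), Polynomial.aeval (B S) (vh h) = Ar S (σ h) := by
    intro h
    have h2 : (Polynomial.aeval (B S) (vh h)).map (algebraMap ℝ ℂ)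
        = (Ar S (σ h)).map (algebraMap ℝ ℂ) := by
      rw [aevalB_map, aeval_A1_map, Ar_map, S.A_eq (σ h)]
      exact Finset.sum_congr rfl fun j _ => by rw [← hval h j]
    ext x y
    have h3 := congrArg (fun M : Matrix V V ℂ => M x y) h2
    simpa using h3
  set w : ℕ → Polynomial ℝ := fun k => if hk : k < d + 1 then vh ⟨k, hk⟩ else 0 with hw_def
  have hw : ∀ k < d, (w k).degree = (k : ℕ) := by
    intro k hk
    rw [hw_def]
    simp only [dif_pos (show k < d + 1 by omega)]
    exact hdeg ⟨k, by omega⟩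
  have hspan := span_poly d w hw (fI S i) (fI_degree_lt S (by omega) hi)
  have hzero : (Polynomial.aeval (B S) (fI S i))
      (pt S (σ (Fin.last d))).1 (pt S (σ (Fin.last d))).2 = 0 := by
    apply entry_zero_of_mem_span_poly S hspan
    rintro p ⟨k, hk, rfl⟩
    have hk' : k < d := hk
    rw [hw_def]
    simp only [dif_pos (show k < d + 1 by omega)]
    rw [hA ⟨k, by omega⟩, Ar_pt, if_neg]
    intro he
    have h4 := σ.injective he
    rw [Fin.ext_iff] at h4
    simp only [Fin.val_last] at h4
    omega
  rw [key_iff S hθ hi (σ (Fin.last d))]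
  exact hzero

lemma Bpow_mem_span {t hh : ℕ} (ht : t ≤ hh) :
    B S ^ t ∈ Submodule.span ℝ ((fun m => Ar S m) '' (rset S hh : Set (Fin (d + 1)))) := by
  have hrepr : B S ^ t = ∑ m ∈ rset S hh, cB S t m • Ar S m := by
    rw [Bpow_repr]
    symm
    apply Finset.sum_subset (Finset.subset_univ _)
    intro m _ hm
    rw [cB_eq_zero_of_not_mem S ht hm, zero_smul]
  rw [hrepr]
  exact Submodule.sum_mem _ fun m hm =>
    Submodule.smul_mem _ _ (Submodule.subset_span ⟨m, Finset.mem_coe.mpr hm, rfl⟩)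

lemma converse_main (hd : 2 ≤ d) (hθ : Function.Injective fun j : Fin (d + 1) => S.P 1 j)
    {l : Fin (d + 1)}
    (hcond : ∀ i : Fin (d + 1), i ≠ 0 →
      (∏ j ∈ Finset.univ.filter (fun j => j ≠ 0 ∧ j ≠ i),
        (S.P 1 0 - S.P 1 j) / (S.P 1 i - S.P 1 j)) = -S.Q i l) :
    S.IsPPolyA1 := by
  have hfI0 : ∀ i : Fin (d + 1), i ≠ 0 →
      (Polynomial.aeval (B S) (fI S i)) (pt S l).1 (pt S l).2 = 0 := by
    intro i hi
    rw [← key_iff S hθ hi l]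
    exact hcond i hi
  have hcBl : ∀ t, t < d → cB S t l = 0 := by
    intro t ht
    have hrep := interp S hθ (by omega) (Polynomial.X ^ t)
      (by rw [Polynomial.degree_X_pow]; exact_mod_cast ht)
    have h6 : cB S t l = (Polynomial.aeval (B S) ((Polynomial.X : Polynomial ℝ) ^ t))
        (pt S l).1 (pt S l).2 := by
      rw [map_pow, Polynomial.aeval_X]
      rfl
    rw [h6, hrep, map_sum, Matrix.sum_apply]
    apply Finset.sum_eq_zero
    intro i hi
    rw [_root_.map_smul, Matrix.smul_apply, hfI0 i (Finset.mem_filter.mp hi).2, smul_zero]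
  have hlnot : l ∉ rset S (d - 1) := by
    rw [mem_rset, not_lt]
    apply le_of_eq
    simp only [gam]
    apply Finset.sum_eq_zero
    intro t ht
    have ht' := Finset.mem_range.mp ht
    exact hcBl t (by omega)
  have hstrict : ∀ p, p < d → rset S p ⊂ rset S (p + 1) := by
    intro p hp
    rw [Finset.ssubset_def]
    refine ⟨rset_mono S (by omega), fun hsub => ?_⟩
    have h1 := rset_stab S hsub d (by omega)
    rw [rset_d S hθ] at h1
    exact hlnot (rset_mono S (by omega : p ≤ d - 1) (h1 (Finset.mem_univ l)))
  have htele : ∀ p j, p + j ≤ d → (rset S p).card + j ≤ (rset S (p + j)).card := by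
    intro p j
    induction j with
    | zero => intro _; simp
    | succ j ih =>
      intro hj
      have h1 := ih (by omega)
      have h2 := Finset.card_lt_card (hstrict (p + j) (by omega))
      have h3 : p + (j + 1) = p + j + 1 := by omega
      rw [h3]
      omega
  have hcard_exact : ∀ h, h ≤ d - 1 → (rset S h).card = h + 1 := by
    intro h hh
    have hge := card_rset_ge S hθ h (by omega)
    have h1 := htele h (d - 1 - h) (by omega)
    have h2 : h + (d - 1 - h) = d - 1 := by omega
    rw [h2] at h1
    have h3 : (rset S (d - 1)).card ≤ d := by
      have hsub : rset S (d - 1) ⊆ Finset.univ.erase l := by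
        intro m hm
        exact Finset.mem_erase.mpr ⟨fun he => hlnot (he ▸ hm), Finset.mem_univ m⟩
      calc (rset S (d - 1)).card ≤ (Finset.univ.erase l).card := Finset.card_le_card hsub
        _ = d := by
          rw [Finset.card_erase_of_mem (Finset.mem_univ l), Finset.card_univ, Fintype.card_fin]
          omega
    omega
  have hcard_all : ∀ h, h ≤ d → (rset S h).card = h + 1 := by
    intro h hh
    rcases eq_or_ne h d with rfl | hne
    · rw [rset_d S hθ, Finset.card_univ, Fintype.card_fin]
    · exact hcard_exact h (by omega)
  have hsing : ∀ h : ℕ, 1 ≤ h → h ≤ d → ∃ a, rset S h \ rset S (h - 1) = {a} := by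
    intro h h1 h2
    rw [← Finset.card_eq_one, Finset.card_sdiff_of_subset (rset_mono S (by omega : h - 1 ≤ h)),
      hcard_all h h2, hcard_all (h - 1) (by omega)]
    omega
  have hsig : ∀ h : Fin (d + 1), ∃ a : Fin (d + 1),
      (1 ≤ (h : ℕ) → rset S (h : ℕ) \ rset S ((h : ℕ) - 1) = {a})
        ∧ ((h : ℕ) = 0 → a = 0) := by
    intro h
    rcases Nat.eq_zero_or_pos (h : ℕ) with h0 | h0
    · exact ⟨0, fun hc => by omega, fun _ => rfl⟩
    · obtain ⟨a, ha⟩ := hsing (h : ℕ) h0 (by have := h.isLt; omega)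
      exact ⟨a, fun _ => ha, fun hc => by omega⟩
  choose g hg1 hg0 using hsig
  have hmem1 : ∀ h : Fin (d + 1), 1 ≤ (h : ℕ) →
      g h ∈ rset S (h : ℕ) ∧ g h ∉ rset S ((h : ℕ) - 1) := by
    intro h hh
    have h2 : g h ∈ rset S (h : ℕ) \ rset S ((h : ℕ) - 1) := by
      rw [hg1 h hh]
      exact Finset.mem_singleton_self _
    exact ⟨(Finset.mem_sdiff.mp h2).1, (Finset.mem_sdiff.mp h2).2⟩
  have hmem : ∀ h : Fin (d + 1), g h ∈ rset S (h : ℕ) := by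
    intro h
    rcases Nat.eq_zero_or_pos (h : ℕ) with h0 | h0
    · rw [hg0 h h0, h0, rset_zero]
      exact Finset.mem_singleton_self _
    · exact (hmem1 h h0).1
  have hinj : Function.Injective g := by
    have key : ∀ a b : Fin (d + 1), (a : ℕ) < (b : ℕ) → g a ≠ g b := by
      intro a b hab hgab
      have hb1 : 1 ≤ (b : ℕ) := by omega
      have h2 := (hmem1 b hb1).2
      have h3 : g a ∈ rset S ((b : ℕ) - 1) := rset_mono S (by omega) (hmem a)
      rw [hgab] at h3
      exact h2 h3
    intro a b hab
    by_contra hne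
    have hvne : (a : ℕ) ≠ (b : ℕ) := fun h => hne (Fin.ext h)
    rcases lt_or_gt_of_ne hvne with h | h
    · exact key a b h hab
    · exact key b a h hab.symm
  have hbij : Function.Bijective g := (Fintype.bijective_iff_injective_and_card g).mpr ⟨hinj, rfl⟩
  refine ⟨Equiv.ofBijective g hbij, ?_, ?_, ?_⟩
  · show g 0 = 0
    exact hg0 0 rfl
  · show g 1 = 1
    have e1 : ((1 : Fin (d + 1)) : ℕ) = 1 := by
      rw [Fin.val_one']; exact Nat.mod_eq_of_lt (by omega)
    have h2 := hg1 1 (by rw [e1])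
    rw [e1] at h2
    have h3 : rset S 1 \ rset S (1 - 1) = {1} := by
      rw [show (1 : ℕ) - 1 = 0 from rfl, rset_one, rset_zero]
      ext m
      simp only [Finset.mem_sdiff, Finset.mem_insert, Finset.mem_singleton]
      constructor
      · rintro ⟨h4 | h4, h5⟩
        · exact absurd h4 h5
        · exact h4
      · intro h4
        refine ⟨Or.inr h4, ?_⟩
        rw [h4]
        intro h5
        have h6 := congrArg Fin.val h5
        rw [e1] at h6
        simp at h6
    rw [h3] at h2
    exact (Finset.singleton_injective h2.symm)
  · intro h
    have hhd : (h : ℕ) ≤ d := by have := h.isLt; omega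
    have hWU : Submodule.span ℝ (Set.range (fun t : Fin ((h : ℕ) + 1) => B S ^ (t : ℕ)))
        ≤ Submodule.span ℝ ((fun m => Ar S m) '' (rset S (h : ℕ) : Set (Fin (d + 1)))) := by
      rw [Submodule.span_le]
      rintro _ ⟨t, rfl⟩
      have ht := t.isLt
      exact Bpow_mem_span S (show (t : ℕ) ≤ (h : ℕ) by omega)
    have hfinW : Module.finrank ℝ
        (Submodule.span ℝ (Set.range (fun t : Fin ((h : ℕ) + 1) => B S ^ (t : ℕ))))
          = (h : ℕ) + 1 := by
      rw [finrank_span_eq_card (powsB_li S hθ hhd)]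
      simp
    have hfinU : Module.finrank ℝ
        (Submodule.span ℝ ((fun m => Ar S m) '' (rset S (h : ℕ) : Set (Fin (d + 1)))))
          ≤ (h : ℕ) + 1 := by
      have h1 : (fun m => Ar S m) '' (rset S (h : ℕ) : Set (Fin (d + 1)))
          = (((rset S (h : ℕ)).image (fun m => Ar S m) : Finset (Matrix V V ℝ))
            : Set (Matrix V V ℝ)) := by
        rw [Finset.coe_image]
      rw [h1]
      have h2 := finrank_span_finset_le_card (R := ℝ)
        ((rset S (h : ℕ)).image (fun m => Ar S m))
      rw [Set.finrank] at h2
      refine le_trans h2 (le_trans Finset.card_image_le ?_)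
      rw [hcard_all (h : ℕ) hhd]
    have hUW : Submodule.span ℝ (Set.range (fun t : Fin ((h : ℕ) + 1) => B S ^ (t : ℕ)))
        = Submodule.span ℝ ((fun m => Ar S m) '' (rset S (h : ℕ) : Set (Fin (d + 1)))) :=
      Submodule.eq_of_le_of_finrank_le hWU (by rw [hfinW]; exact hfinU)
    have hmemA : Ar S (Equiv.ofBijective g hbij h)
        ∈ Submodule.span ℝ (Set.range (fun t : Fin ((h : ℕ) + 1) => B S ^ (t : ℕ))) := by
      rw [hUW]
      exact Submodule.subset_span ⟨g h, Finset.mem_coe.mpr (hmem h), rfl⟩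
    rw [Submodule.mem_span_range_iff_exists_fun] at hmemA
    obtain ⟨c, hc⟩ := hmemA
    have haev : Polynomial.aeval (B S) (pOf c) = Ar S (Equiv.ofBijective g hbij h) := by
      rw [pOf_aeval]
      exact hc
    have hvals : ∀ j, S.P (Equiv.ofBijective g hbij h) j = (pOf c).eval (S.P 1 j) := by
      have h2 : ∑ j, ((S.P (Equiv.ofBijective g hbij h) j : ℝ) : ℂ) • S.E j
          = ∑ j, (((pOf c).eval (S.P 1 j) : ℝ) : ℂ) • S.E j := by
        rw [← S.A_eq, ← aeval_A1_map, ← aevalB_map, haev, Ar_map]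
      intro j
      exact_mod_cast E_coeff_ext S h2 j
    have hne0 : pOf c ≠ 0 := by
      intro h0
      have h2 : Ar S (Equiv.ofBijective g hbij h)
          (pt S (Equiv.ofBijective g hbij h)).1 (pt S (Equiv.ofBijective g hbij h)).2 = 1 := by
        rw [Ar_pt, if_pos rfl]
      rw [← haev, h0] at h2
      simp at h2
    have hnatle : (pOf c).natDegree ≤ (h : ℕ) := by
      have := pOf_natDegree_lt (Nat.succ_pos _) c
      omega
    have hnat : (pOf c).natDegree = (h : ℕ) := by
      by_contra hne2
      have hk : (pOf c).natDegree < (h : ℕ) := by omega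
      have hh1 : 1 ≤ (h : ℕ) := by omega
      have hmem2 : Ar S (Equiv.ofBijective g hbij h) ∈ Submodule.span ℝ
          ((fun m => Ar S m) '' (rset S ((h : ℕ) - 1) : Set (Fin (d + 1)))) := by
        rw [← haev, Polynomial.aeval_eq_sum_range' hk]
        apply Submodule.sum_mem
        intro t ht
        apply Submodule.smul_mem
        exact Bpow_mem_span S (show t ≤ (h : ℕ) - 1 by
          have := Finset.mem_range.mp ht; omega)
      have h3 := entry_zero_of_mem_span_Ar S hmem2
        (k := Equiv.ofBijective g hbij h)
        (fun hx => (hmem1 h hh1).2 (Finset.mem_coe.mp hx))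
      rw [Ar_pt, if_pos rfl] at h3
      norm_num at h3
    refine ⟨pOf c, ?_, fun j => hvals j⟩
    rw [Polynomial.degree_eq_natDegree hne0, hnat]

end S13


/-- the `P`-polynomial analogue of the main theorem. For a
symmetric association scheme of class `d ≥ 2` with `θ_0 = p_1(0), …, θ_d = p_1(d)`
mutually distinct: `𝔛` is `P`-polynomial with respect to `A_1` iff there exists
`l ∈ {2, …, d}` such that `∏_{j=1,j≠i}^d (θ_0 − θ_j)/(θ_i − θ_j) = −q_i(l)` for all
`i ∈ {1, …, d}`; moreover, in that case `l = i_d`, the last index of any such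
`P`-polynomial ordering. -/
theorem statement13 {d : ℕ} {V : Type*} [Fintype V] [DecidableEq V]
    (S : SymmAssocScheme d V) (hd : 2 ≤ d)
    (hθ : Function.Injective fun j : Fin (d + 1) => S.P 1 j) :
    (S.IsPPolyA1 ↔
      ∃ l : Fin (d + 1), 2 ≤ (l : ℕ) ∧
        ∀ i : Fin (d + 1), i ≠ 0 →
          (∏ j ∈ Finset.univ.filter (fun j => j ≠ 0 ∧ j ≠ i),
            (S.P 1 0 - S.P 1 j) / (S.P 1 i - S.P 1 j)) = -S.Q i l) ∧
    (∀ l : Fin (d + 1), 2 ≤ (l : ℕ) →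
      (∀ i : Fin (d + 1), i ≠ 0 →
        (∏ j ∈ Finset.univ.filter (fun j => j ≠ 0 ∧ j ≠ i),
          (S.P 1 0 - S.P 1 j) / (S.P 1 i - S.P 1 j)) = -S.Q i l) →
      ∀ σ : Equiv.Perm (Fin (d + 1)), σ 0 = 0 → σ 1 = 1 → S.IsPPolyOrdering σ →
        σ (Fin.last d) = l) := by
  constructor
  · constructor
    · rintro ⟨σ, h0, h1, hord⟩
      obtain ⟨h2, h3⟩ := S13.forward_main S hd hθ σ h0 h1 hord
      exact ⟨σ (Fin.last d), h2, h3⟩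
    · rintro ⟨l, hl2, hcond⟩
      exact S13.converse_main S hd hθ hcond
  · intro l hl2 hcond σ h0 h1 hord
    obtain ⟨-, h3⟩ := S13.forward_main S hd hθ σ h0 h1 hord
    apply S13.Q_col_inj S
    intro j
    rcases eq_or_ne j 0 with rfl | hj
    · rw [S13.Q_zero, S13.Q_zero]
    · have h4 := (h3 j hj).symm.trans (hcond j hj)
      linarith
end
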